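/- Gradient-norm sandwich: assuming ℓ'(s) < 0 for all s ∈ ℝ, for every w ∈ ℝ^d one has (γ/N)·∑_{i} (−ℓ'(⟪w, x i⟫)) ≤ ‖∇L(w)‖ ≤ (σ_max/N)·∑_{i} (−ℓ'(⟪w, x i⟫)). -/
import Mathlib


open Filter Topology RealInnerProductSpace MeasureTheory

set_option linter.unusedVariables false

theorem stmt12
    {d N : ℕ} (hN : 1 ≤ N)
    (x : Fin N → EuclideanSpace ℝ (Fin d))
    (ℓ ℓ' : ℝ → ℝ)
    (hdiff : ∀ s : ℝ, HasDerivAt ℓ (ℓ' s) s)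
    (L : EuclideanSpace ℝ (Fin d) → ℝ)
    (hLdef : ∀ w : EuclideanSpace ℝ (Fin d), L w = (1 / (N : ℝ)) * ∑ i, ℓ ⟪w, x i⟫)
    (gradL : EuclideanSpace ℝ (Fin d) → EuclideanSpace ℝ (Fin d))
    (hgraddef : ∀ w : EuclideanSpace ℝ (Fin d),
      gradL w = (1 / (N : ℝ)) • ∑ i, ℓ' ⟪w, x i⟫ • x i)
    (σmax : ℝ) (hσpos : 0 < σmax)
    (hσ : ∀ c : Fin N → ℝ, ‖∑ i, c i • x i‖ ≤ σmax * Real.sqrt (∑ i, (c i) ^ 2))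
    (wmax : EuclideanSpace ℝ (Fin d))
    (hwmax : ∀ i, 1 ≤ ⟪wmax, x i⟫)
    (hwmaxmin : ∀ v : EuclideanSpace ℝ (Fin d), (∀ i, 1 ≤ ⟪v, x i⟫) → ‖wmax‖ ≤ ‖v‖)
    (hℓ'neg : ∀ s : ℝ, ℓ' s < 0) :
    ∀ w : EuclideanSpace ℝ (Fin d),
      (‖wmax‖⁻¹ / N) * ∑ i, (-ℓ' ⟪w, x i⟫) ≤ ‖gradL w‖ ∧
      ‖gradL w‖ ≤ (σmax / N) * ∑ i, (-ℓ' ⟪w, x i⟫) := by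
  intro w
  have hNpos : (0:ℝ) < N := by exact_mod_cast hN
  have hwnorm : 0 < ‖wmax‖ := by
    rcases eq_or_lt_of_le (norm_nonneg wmax) with h | h
    · exfalso
      have hw0 : wmax = 0 := by
        have := h.symm
        simpa [norm_eq_zero] using this
      have := hwmax ⟨0, hN⟩
      rw [hw0] at this
      simp at this
      linarith
    · exact h
  set c : Fin N → ℝ := fun i => ℓ' ⟪w, x i⟫ with hc
  have hcneg : ∀ i, c i < 0 := fun i => hℓ'neg _
  -- inner product with wmax
  have hinner : ⟪wmax, gradL w⟫ = (1 / (N:ℝ)) * ∑ i, c i * ⟪wmax, x i⟫ := by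
    rw [hgraddef, real_inner_smul_right, inner_sum]
    congr 1
    refine Finset.sum_congr rfl fun i _ => ?_
    rw [real_inner_smul_right]
  -- lower bound
  have hlow : (1 / (N:ℝ)) * ∑ i, (-c i) ≤ ‖wmax‖ * ‖gradL w‖ := by
    have h1 : ∑ i, (-c i) ≤ ∑ i, (-c i) * ⟪wmax, x i⟫ := by
      apply Finset.sum_le_sum
      intro i _
      have : 0 ≤ -c i := le_of_lt (neg_pos.mpr (hcneg i))
      nlinarith [hwmax i]
    have h2 : ⟪wmax, -gradL w⟫ = (1 / (N:ℝ)) * ∑ i, (-c i) * ⟪wmax, x i⟫ := by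
      rw [inner_neg_right, hinner]
      have hs : ∑ i, (-c i) * ⟪wmax, x i⟫ = -∑ i, c i * ⟪wmax, x i⟫ := by
        simp [neg_mul]
      rw [hs]
      ring
    have h3 : ⟪wmax, -gradL w⟫ ≤ ‖wmax‖ * ‖-gradL w‖ := real_inner_le_norm _ _
    rw [norm_neg] at h3
    have := h1
    calc (1 / (N:ℝ)) * ∑ i, (-c i)
        ≤ (1 / (N:ℝ)) * ∑ i, (-c i) * ⟪wmax, x i⟫ := by
          apply mul_le_mul_of_nonneg_left h1 (by positivity)
      _ = ⟪wmax, -gradL w⟫ := h2.symm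
      _ ≤ ‖wmax‖ * ‖gradL w‖ := h3
  constructor
  · have key : (‖wmax‖⁻¹ / N) * ∑ i, (-c i) = ‖wmax‖⁻¹ * ((1 / (N:ℝ)) * ∑ i, (-c i)) := by
      ring
    rw [key]
    rw [inv_mul_le_iff₀ hwnorm]
    exact hlow
  · -- upper bound
    have hnorm : ‖gradL w‖ = (1 / (N:ℝ)) * ‖∑ i, c i • x i‖ := by
      rw [hgraddef, norm_smul, Real.norm_eq_abs,
        abs_of_pos (by positivity : (0:ℝ) < 1 / N)]
    rw [hnorm]
    have hσc := hσ c
    have hsqrt : Real.sqrt (∑ i, (c i)^2) ≤ ∑ i, (-c i) := by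
      have h1 : ∑ i, (c i)^2 ≤ (∑ i, (-c i))^2 := by
        have := Finset.sum_sq_le_sq_sum_of_nonneg
          (s := Finset.univ) (f := fun i => -c i)
          (fun i _ => le_of_lt (neg_pos.mpr (hcneg i)))
        simpa using this
      calc Real.sqrt (∑ i, (c i)^2) ≤ Real.sqrt ((∑ i, (-c i))^2) :=
            Real.sqrt_le_sqrt h1
        _ = ∑ i, (-c i) := Real.sqrt_sq (Finset.sum_nonneg fun i _ =>
            le_of_lt (neg_pos.mpr (hcneg i)))
    calc (1 / (N:ℝ)) * ‖∑ i, c i • x i‖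
        ≤ (1 / (N:ℝ)) * (σmax * Real.sqrt (∑ i, (c i)^2)) := by
          apply mul_le_mul_of_nonneg_left hσc (by positivity)
      _ ≤ (1 / (N:ℝ)) * (σmax * ∑ i, (-c i)) := by
          apply mul_le_mul_of_nonneg_left _ (by positivity)
          exact mul_le_mul_of_nonneg_left hsqrt (le_of_lt hσpos)
      _ = (σmax / N) * ∑ i, (-c i) := by ring
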